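/- Let R be a ring with identity, a ∈ R and j ∈ J(R). Suppose a is group invertible and a⁺ is a reflexive inverse of a. Then the following are equivalent: (1) a + j is group invertible; (2) a + j is regular; (3) (1 − a·a⁺)·j·(1 + a⁺·j)⁻¹·(1 − a⁺·a) = 0. In this case, setting j₂ := j + a·j·a⁺ + a⁺·j·a + j²·a⁺ + a⁺·j² + a⁺·j·a·j·a⁺ + a⁺·j³·a⁺, the element 1 + j₂·a# is a unit and (a + j)# = (1 + j·a⁺)·a#·(1 + j₂·a#)⁻¹·(1 + a⁺·j). -/

import Mathlib

set_option maxHeartbeats 1000000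

/-- `x` is the group inverse of `a`. -/
def IsGroupInverse {R : Type*} [Ring R] (a x : R) : Prop :=
  a * x * a = a ∧ x * a * x = x ∧ a * x = x * a

section Aux

variable {R : Type*} [Ring R]

lemma jacRight {z : R} (hz : z ∈ Ideal.jacobson (⊥ : Ideal R)) (r : R) :
    z * r ∈ Ideal.jacobson (⊥ : Ideal R) :=
  Ideal.mul_mem_right _ _ hz

lemma jacInv {z : R} (hz : z ∈ Ideal.jacobson (⊥ : Ideal R)) :
    ∃ w : R, w * (1 + z) = 1 ∧ (1 + z) * w = 1 := by
  obtain ⟨s, hs⟩ := Ideal.exists_mul_add_sub_mem_of_mem_jacobson z hz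
  rw [Ideal.mem_bot, sub_eq_zero] at hs
  have hsz : -(s * z) ∈ Ideal.jacobson (⊥ : Ideal R) :=
    neg_mem (Ideal.mul_mem_left _ s hz)
  obtain ⟨r, hr⟩ := Ideal.exists_mul_add_sub_mem_of_mem_jacobson _ hsz
  rw [Ideal.mem_bot, sub_eq_zero] at hr
  have hs' : -(s * z) + 1 = s := by
    calc -(s * z) + 1 = -(s * z) + s * (z + 1) := by rw [hs]
    _ = s := by noncomm_ring
  rw [hs'] at hr
  have h1 : s * (1 + z) = 1 := by rw [add_comm]; exact hs
  have h2 : (1 + z) * s = 1 := by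
    have hre : r = 1 + z := by
      calc r = r * (s * (1 + z)) := by rw [h1, mul_one]
      _ = (r * s) * (1 + z) := by rw [← mul_assoc]
      _ = 1 + z := by rw [hr, one_mul]
    rw [← hre]; exact hr
  exact ⟨s, h1, h2⟩

lemma jacUnit {z : R} (hz : z ∈ Ideal.jacobson (⊥ : Ideal R)) : IsUnit (1 + z) := by
  obtain ⟨w, h1, h2⟩ := jacInv hz
  exact ⟨⟨1 + z, w, h2, h1⟩, rfl⟩

lemma aux_reg_to_cond (a ap j x : R)
    (hj : j ∈ Ideal.jacobson (⊥ : Ideal R))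
    (h4 : a * ap * a = a) (h5 : ap * a * ap = ap)
    (hx : (a + j) * x * (a + j) = a + j) :
    (1 - a * ap) * j * Ring.inverse (1 + ap * j) * (1 - ap * a) = 0 := by
  have hu : IsUnit (1 + ap * j) := jacUnit (Ideal.mul_mem_left _ ap hj)
  have huU : (1 + ap * j) * Ring.inverse (1 + ap * j) = 1 := Ring.mul_inverse_cancel _ hu
  have hUu : Ring.inverse (1 + ap * j) * (1 + ap * j) = 1 := Ring.inverse_mul_cancel _ hu
  generalize hUdef : Ring.inverse (1 + ap * j) = U at huU hUu ⊢
  have hapE : ap * (1 - a * ap) = 0 := by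
    have h' : ap * (a * ap) = ap := by rw [← mul_assoc]; exact h5
    calc ap * (1 - a * ap) = ap - ap * (a * ap) := by noncomm_ring
    _ = ap - ap := by rw [h']
    _ = 0 := sub_self _
  have hcross : (j * U * ap) * ((1 - a * ap) * ((j * U) * (1 - ap * a))) = 0 := by
    calc (j * U * ap) * ((1 - a * ap) * ((j * U) * (1 - ap * a)))
        = (j * U) * ((ap * (1 - a * ap)) * ((j * U) * (1 - ap * a))) := by noncomm_ring
    _ = (j * U) * (0 * ((j * U) * (1 - ap * a))) := by rw [hapE]
    _ = 0 := by rw [zero_mul, mul_zero]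
  have hkU : (j * U) * (1 + ap * j) = j := by rw [mul_assoc, hUu, mul_one]
  have key : (1 + (1 - a * ap) * (j * U * ap)) *
      ((a + (1 - a * ap) * ((j * U) * (1 - ap * a))) * (1 + ap * j)) = a + j := by
    calc (1 + (1 - a * ap) * (j * U * ap)) *
        ((a + (1 - a * ap) * ((j * U) * (1 - ap * a))) * (1 + ap * j))
        = (a + (1 - a * ap) * ((j * U) * (1 - ap * a)) + (1 - a * ap) * ((j * U * ap) * a)
            + (1 - a * ap) * ((j * U * ap) * ((1 - a * ap) * ((j * U) * (1 - ap * a)))))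
              * (1 + ap * j) := by noncomm_ring
    _ = (a + (1 - a * ap) * ((j * U) * (1 - ap * a)) + (1 - a * ap) * ((j * U * ap) * a)
            + (1 - a * ap) * 0) * (1 + ap * j) := by rw [hcross]
    _ = a * (1 + ap * j) + (1 - a * ap) * ((j * U) * (1 + ap * j)) := by noncomm_ring
    _ = a * (1 + ap * j) + (1 - a * ap) * j := by rw [hkU]
    _ = a + j := by noncomm_ring
  have hwJ : (1 - a * ap) * (j * U * ap) ∈ Ideal.jacobson (⊥ : Ideal R) :=
    Ideal.mul_mem_left _ _ (jacRight (jacRight hj U) ap)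
  obtain ⟨W, hWw, hwW⟩ := jacInv hwJ
  have hfact : a + (1 - a * ap) * ((j * U) * (1 - ap * a)) = W * ((a + j) * U) := by
    calc a + (1 - a * ap) * ((j * U) * (1 - ap * a))
        = (W * (1 + (1 - a * ap) * (j * U * ap))) *
            ((a + (1 - a * ap) * ((j * U) * (1 - ap * a))) * ((1 + ap * j) * U)) := by
          rw [hWw, huU, mul_one, one_mul]
    _ = W * (((1 + (1 - a * ap) * (j * U * ap)) *
          ((a + (1 - a * ap) * ((j * U) * (1 - ap * a))) * (1 + ap * j))) * U) := by
          noncomm_ring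
    _ = W * ((a + j) * U) := by rw [key]
  have hEa : (1 - a * ap) * a = 0 := by
    calc (1 - a * ap) * a = a - a * ap * a := by noncomm_ring
    _ = a - a := by rw [h4]
    _ = 0 := sub_self _
  have haF : a * (1 - ap * a) = 0 := by
    have h' : a * (ap * a) = a := by rw [← mul_assoc]; exact h4
    calc a * (1 - ap * a) = a - a * (ap * a) := by noncomm_ring
    _ = a - a := by rw [h']
    _ = 0 := sub_self _
  have hEE : (1 - a * ap) * (1 - a * ap) = 1 - a * ap := by
    calc (1 - a * ap) * (1 - a * ap) = 1 - a * ap - a * ap + (a * ap * a) * ap := by noncomm_ring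
    _ = 1 - a * ap - a * ap + a * ap := by rw [h4]
    _ = 1 - a * ap := by noncomm_ring
  have hFF : (1 - ap * a) * (1 - ap * a) = 1 - ap * a := by
    calc (1 - ap * a) * (1 - ap * a) = 1 - ap * a - ap * a + ap * (a * ap * a) := by noncomm_ring
    _ = 1 - ap * a - ap * a + ap * a := by rw [h4]
    _ = 1 - ap * a := by noncomm_ring
  have hEs : (1 - a * ap) * ((1 - a * ap) * ((j * U) * (1 - ap * a)))
      = (1 - a * ap) * ((j * U) * (1 - ap * a)) := by
    calc (1 - a * ap) * ((1 - a * ap) * ((j * U) * (1 - ap * a)))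
        = ((1 - a * ap) * (1 - a * ap)) * ((j * U) * (1 - ap * a)) := by noncomm_ring
    _ = (1 - a * ap) * ((j * U) * (1 - ap * a)) := by rw [hEE]
  have hEG : (1 - a * ap) * (W * ((a + j) * U)) = (1 - a * ap) * ((j * U) * (1 - ap * a)) := by
    rw [← hfact]
    calc (1 - a * ap) * (a + (1 - a * ap) * ((j * U) * (1 - ap * a)))
        = (1 - a * ap) * a + ((1 - a * ap) * (1 - a * ap)) * ((j * U) * (1 - ap * a)) := by
          noncomm_ring
    _ = 0 + (1 - a * ap) * ((j * U) * (1 - ap * a)) := by rw [hEa, hEE]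
    _ = (1 - a * ap) * ((j * U) * (1 - ap * a)) := zero_add _
  have hGF : (W * ((a + j) * U)) * (1 - ap * a) = (1 - a * ap) * ((j * U) * (1 - ap * a)) := by
    rw [← hfact]
    calc (a + (1 - a * ap) * ((j * U) * (1 - ap * a))) * (1 - ap * a)
        = a * (1 - ap * a) + (1 - a * ap) * ((j * U) * ((1 - ap * a) * (1 - ap * a))) := by
          noncomm_ring
    _ = 0 + (1 - a * ap) * ((j * U) * (1 - ap * a)) := by rw [haF, hFF]
    _ = (1 - a * ap) * ((j * U) * (1 - ap * a)) := zero_add _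
  have hins : (W * ((a + j) * U)) * ((1 + ap * j) *
      (x * ((1 + (1 - a * ap) * (j * U * ap)) * (W * ((a + j) * U)))))
      = W * (((a + j) * x * (a + j)) * U) := by
    calc (W * ((a + j) * U)) * ((1 + ap * j) *
        (x * ((1 + (1 - a * ap) * (j * U * ap)) * (W * ((a + j) * U)))))
        = W * ((a + j) * ((U * (1 + ap * j)) *
            (x * (((1 + (1 - a * ap) * (j * U * ap)) * W) * ((a + j) * U))))) := by noncomm_ring
    _ = W * ((a + j) * (1 * (x * (1 * ((a + j) * U))))) := by rw [hUu, hwW]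
    _ = W * (((a + j) * x * (a + j)) * U) := by noncomm_ring
  have hfix : (1 - a * ap) * ((j * U) * (1 - ap * a))
      = ((1 - a * ap) * ((j * U) * (1 - ap * a))) *
          ((1 + ap * j) * (x * (1 + (1 - a * ap) * (j * U * ap)))) *
          ((1 - a * ap) * ((j * U) * (1 - ap * a))) := by
    calc (1 - a * ap) * ((j * U) * (1 - ap * a))
        = (1 - a * ap) * ((W * ((a + j) * U)) * (1 - ap * a)) := by rw [hGF]; exact hEs.symm
    _ = (1 - a * ap) * ((W * (((a + j) * x * (a + j)) * U)) * (1 - ap * a)) := by rw [hx]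
    _ = (1 - a * ap) * (((W * ((a + j) * U)) * ((1 + ap * j) *
          (x * ((1 + (1 - a * ap) * (j * U * ap)) * (W * ((a + j) * U)))))) * (1 - ap * a)) := by
          rw [hins]
    _ = ((1 - a * ap) * (W * ((a + j) * U))) *
          ((1 + ap * j) * (x * (1 + (1 - a * ap) * (j * U * ap)))) *
          ((W * ((a + j) * U)) * (1 - ap * a)) := by noncomm_ring
    _ = ((1 - a * ap) * ((j * U) * (1 - ap * a))) *
          ((1 + ap * j) * (x * (1 + (1 - a * ap) * (j * U * ap)))) *
          ((1 - a * ap) * ((j * U) * (1 - ap * a))) := by rw [hEG, hGF]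
  have hsJ : (1 - a * ap) * ((j * U) * (1 - ap * a)) ∈ Ideal.jacobson (⊥ : Ideal R) :=
    Ideal.mul_mem_left _ _ (jacRight (jacRight hj U) (1 - ap * a))
  have hsyJ : -(((1 - a * ap) * ((j * U) * (1 - ap * a))) *
      ((1 + ap * j) * (x * (1 + (1 - a * ap) * (j * U * ap))))) ∈ Ideal.jacobson (⊥ : Ideal R) :=
    neg_mem (jacRight hsJ _)
  obtain ⟨Z, hZ1, _⟩ := jacInv hsyJ
  have hfinal : (1 - a * ap) * ((j * U) * (1 - ap * a)) = 0 := by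
    calc (1 - a * ap) * ((j * U) * (1 - ap * a))
        = (Z * (1 + -(((1 - a * ap) * ((j * U) * (1 - ap * a))) *
            ((1 + ap * j) * (x * (1 + (1 - a * ap) * (j * U * ap))))))) *
            ((1 - a * ap) * ((j * U) * (1 - ap * a))) := by rw [hZ1, one_mul]
    _ = Z * ((1 - a * ap) * ((j * U) * (1 - ap * a)) -
          ((1 - a * ap) * ((j * U) * (1 - ap * a))) *
            ((1 + ap * j) * (x * (1 + (1 - a * ap) * (j * U * ap)))) *
            ((1 - a * ap) * ((j * U) * (1 - ap * a)))) := by noncomm_ring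
    _ = Z * ((1 - a * ap) * ((j * U) * (1 - ap * a)) -
          (1 - a * ap) * ((j * U) * (1 - ap * a))) := by rw [← hfix]
    _ = 0 := by rw [sub_self, mul_zero]
  calc (1 - a * ap) * j * U * (1 - ap * a)
      = (1 - a * ap) * ((j * U) * (1 - ap * a)) := by noncomm_ring
  _ = 0 := hfinal

lemma aux_group (a ag b c u U v V t t' T T' : R)
    (h1 : a * ag * a = a) (h2 : ag * a * ag = ag) (h3 : a * ag = ag * a)
    (huU : u * U = 1) (hUu : U * u = 1) (hvV : v * V = 1) (hVv : V * v = 1)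
    (htT : t * T = 1) (hT't' : T' * t' = 1)
    (hagt : ag * t = t' * ag)
    (hc : u * b * v = c)
    (hcag : c * ag = t + a * ag - 1)
    (hagc : ag * c = t' + a * ag - 1)
    (hi : b * U * (1 - a * ag) = 0)
    (hii : (1 - a * ag) * (V * b) = 0) :
    IsGroupInverse b (v * ag * T * u) := by
  have hagT : ag * T = T' * ag := by
    calc ag * T = (T' * t') * (ag * T) := by rw [hT't', one_mul]
    _ = T' * ((t' * ag) * T) := by noncomm_ring
    _ = T' * ((ag * t) * T) := by rw [← hagt]
    _ = (T' * ag) * (t * T) := by noncomm_ring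
    _ = T' * ag := by rw [htT, mul_one]
  have hpag' : (1 - a * ag) * ag = 0 := by
    have h' : (a * ag) * ag = ag := by rw [h3]; exact h2
    calc (1 - a * ag) * ag = ag - (a * ag) * ag := by noncomm_ring
    _ = ag - ag := by rw [h']
    _ = 0 := sub_self _
  have hbv : b * v = U * c := by
    calc b * v = (U * u) * (b * v) := by rw [hUu, one_mul]
    _ = U * (u * b * v) := by noncomm_ring
    _ = U * c := by rw [hc]
  have hub : u * b = c * V := by
    calc u * b = (u * b) * (v * V) := by rw [hvV, mul_one]
    _ = (u * b * v) * V := by noncomm_ring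
    _ = c * V := by rw [hc]
  have hbx : b * (v * ag * T * u) = 1 + U * ((a * ag - 1) * (T * u)) := by
    calc b * (v * ag * T * u) = (b * v) * (ag * (T * u)) := by noncomm_ring
    _ = (U * c) * (ag * (T * u)) := by rw [hbv]
    _ = U * ((c * ag) * (T * u)) := by noncomm_ring
    _ = U * ((t + a * ag - 1) * (T * u)) := by rw [hcag]
    _ = U * (t * T) * u + U * ((a * ag - 1) * (T * u)) := by noncomm_ring
    _ = 1 + U * ((a * ag - 1) * (T * u)) := by rw [htT, mul_one, hUu]
  have hxb : (v * ag * T * u) * b = 1 + (v * T') * ((a * ag - 1) * V) := by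
    calc (v * ag * T * u) * b = (v * (ag * T)) * (u * b) := by noncomm_ring
    _ = (v * (ag * T)) * (c * V) := by rw [hub]
    _ = (v * (T' * ag)) * (c * V) := by rw [hagT]
    _ = (v * T') * ((ag * c) * V) := by noncomm_ring
    _ = (v * T') * ((t' + a * ag - 1) * V) := by rw [hagc]
    _ = v * (T' * t') * V + (v * T') * ((a * ag - 1) * V) := by noncomm_ring
    _ = 1 + (v * T') * ((a * ag - 1) * V) := by rw [hT't', mul_one, hvV]
  have hb2x : b * (b * (v * ag * T * u)) = b := by
    calc b * (b * (v * ag * T * u)) = b * (1 + U * ((a * ag - 1) * (T * u))) := by rw [hbx]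
    _ = b + (b * U * (1 - a * ag)) * (-(T * u)) := by noncomm_ring
    _ = b + 0 * (-(T * u)) := by rw [hi]
    _ = b := by rw [zero_mul, add_zero]
  have hxb2 : ((v * ag * T * u) * b) * b = b := by
    calc ((v * ag * T * u) * b) * b = (1 + (v * T') * ((a * ag - 1) * V)) * b := by rw [hxb]
    _ = b + (-(v * T')) * ((1 - a * ag) * (V * b)) := by noncomm_ring
    _ = b + (-(v * T')) * 0 := by rw [hii]
    _ = b := by rw [mul_zero, add_zero]
  have e1 : (v * ag * T * u) * b = ((v * ag * T * u) * b) * (b * (v * ag * T * u)) := by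
    conv_lhs => rw [← hb2x]
    noncomm_ring
  have e2 : b * (v * ag * T * u) = ((v * ag * T * u) * b) * (b * (v * ag * T * u)) := by
    conv_lhs => rw [← hxb2]
    noncomm_ring
  have hcomm : b * (v * ag * T * u) = (v * ag * T * u) * b := e2.trans e1.symm
  have ax1 : b * (v * ag * T * u) * b = b := by rw [hcomm]; exact hxb2
  have ax2 : (v * ag * T * u) * b * (v * ag * T * u) = v * ag * T * u := by
    calc (v * ag * T * u) * b * (v * ag * T * u)
        = (1 + (v * T') * ((a * ag - 1) * V)) * (v * ag * T * u) := by rw [hxb]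
    _ = v * ag * T * u + (v * T') * ((a * ag - 1) * ((V * v) * (ag * (T * u)))) := by
        noncomm_ring
    _ = v * ag * T * u + (v * T') * ((a * ag - 1) * (1 * (ag * (T * u)))) := by rw [hVv]
    _ = v * ag * T * u + (-(v * T')) * (((1 - a * ag) * ag) * (T * u)) := by noncomm_ring
    _ = v * ag * T * u + (-(v * T')) * (0 * (T * u)) := by rw [hpag']
    _ = v * ag * T * u := by rw [zero_mul, mul_zero, add_zero]
  exact ⟨ax1, ax2, hcomm⟩

end Aux

/-- if `a` is group invertible (with group inverse `ag`), `a⁺` is a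
reflexive inverse of `a` and `j` is in the Jacobson radical, then (1) `a + j` is group
invertible ↔ (2) `a + j` is regular ↔ (3) `(1 - a a⁺) j (1 + a⁺ j)⁻¹ (1 - a⁺ a) = 0`;
in this case, with `j₂` as displayed, `1 + j₂ a#` is a unit and
`(a + j)# = (1 + j a⁺) a# (1 + j₂ a#)⁻¹ (1 + a⁺ j)`. -/
theorem stmt7 {R : Type*} [Ring R] (a ag ap j : R)
    (hj : j ∈ Ideal.jacobson (⊥ : Ideal R))
    (hag : IsGroupInverse a ag)
    (hap : a * ap * a = a ∧ ap * a * ap = ap) :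
    ((∃ x, IsGroupInverse (a + j) x) ↔ (∃ x, (a + j) * x * (a + j) = a + j)) ∧
    ((∃ x, IsGroupInverse (a + j) x) ↔
      (1 - a * ap) * j * Ring.inverse (1 + ap * j) * (1 - ap * a) = 0) ∧
    ((1 - a * ap) * j * Ring.inverse (1 + ap * j) * (1 - ap * a) = 0 →
      ∀ j₂ : R, j₂ = j + a * j * ap + ap * j * a + j * j * ap + ap * (j * j)
          + ap * j * a * j * ap + ap * (j * j * j) * ap →
        IsUnit (1 + j₂ * ag) ∧
        IsGroupInverse (a + j)
          ((1 + j * ap) * ag * Ring.inverse (1 + j₂ * ag) * (1 + ap * j))) := by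
  obtain ⟨h1, h2, h3⟩ := hag
  obtain ⟨h4, h5⟩ := hap
  have regcond : (∃ x, (a + j) * x * (a + j) = a + j) →
      (1 - a * ap) * j * Ring.inverse (1 + ap * j) * (1 - ap * a) = 0 := by
    rintro ⟨x, hx⟩
    exact aux_reg_to_cond a ap j x hj h4 h5 hx
  have main : (1 - a * ap) * j * Ring.inverse (1 + ap * j) * (1 - ap * a) = 0 →
      ∀ j₂ : R, j₂ = j + a * j * ap + ap * j * a + j * j * ap + ap * (j * j)
          + ap * j * a * j * ap + ap * (j * j * j) * ap →
        IsUnit (1 + j₂ * ag) ∧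
        IsGroupInverse (a + j)
          ((1 + j * ap) * ag * Ring.inverse (1 + j₂ * ag) * (1 + ap * j)) := by
    intro hcond j₂ hj₂
    have hu : IsUnit (1 + ap * j) := jacUnit (Ideal.mul_mem_left _ ap hj)
    have huU : (1 + ap * j) * Ring.inverse (1 + ap * j) = 1 := Ring.mul_inverse_cancel _ hu
    have hUu : Ring.inverse (1 + ap * j) * (1 + ap * j) = 1 := Ring.inverse_mul_cancel _ hu
    have hv : IsUnit (1 + j * ap) := jacUnit (jacRight hj ap)
    have hvV : (1 + j * ap) * Ring.inverse (1 + j * ap) = 1 := Ring.mul_inverse_cancel _ hv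
    have hVv : Ring.inverse (1 + j * ap) * (1 + j * ap) = 1 := Ring.inverse_mul_cancel _ hv
    have hj2J : j₂ ∈ Ideal.jacobson (⊥ : Ideal R) := by
      rw [hj₂]
      have m1 : a * j * ap ∈ Ideal.jacobson (⊥ : Ideal R) :=
        jacRight (Ideal.mul_mem_left _ a hj) ap
      have m2 : ap * j * a ∈ Ideal.jacobson (⊥ : Ideal R) :=
        jacRight (Ideal.mul_mem_left _ ap hj) a
      have m3 : j * j * ap ∈ Ideal.jacobson (⊥ : Ideal R) :=
        jacRight (Ideal.mul_mem_left _ j hj) ap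
      have m4 : ap * (j * j) ∈ Ideal.jacobson (⊥ : Ideal R) :=
        Ideal.mul_mem_left _ ap (Ideal.mul_mem_left _ j hj)
      have m5 : ap * j * a * j * ap ∈ Ideal.jacobson (⊥ : Ideal R) :=
        jacRight (jacRight (jacRight (Ideal.mul_mem_left _ ap hj) a) j) ap
      have m6 : ap * (j * j * j) * ap ∈ Ideal.jacobson (⊥ : Ideal R) :=
        jacRight (Ideal.mul_mem_left _ ap
          (Ideal.mul_mem_left _ (j * j) hj)) ap
      exact Ideal.add_mem _ (Ideal.add_mem _ (Ideal.add_mem _ (Ideal.add_mem _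
        (Ideal.add_mem _ (Ideal.add_mem _ hj m1) m2) m3) m4) m5) m6
    have ht : IsUnit (1 + j₂ * ag) := jacUnit (jacRight hj2J ag)
    have ht' : IsUnit (1 + ag * j₂) := jacUnit (Ideal.mul_mem_left _ ag hj2J)
    have htT : (1 + j₂ * ag) * Ring.inverse (1 + j₂ * ag) = 1 := Ring.mul_inverse_cancel _ ht
    have hT't' : Ring.inverse (1 + ag * j₂) * (1 + ag * j₂) = 1 := Ring.inverse_mul_cancel _ ht'
    refine ⟨ht, ?_⟩
    generalize hUdef : Ring.inverse (1 + ap * j) = U at huU hUu hcond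
    generalize hVdef : Ring.inverse (1 + j * ap) = V at hvV hVv
    generalize hTdef : Ring.inverse (1 + j₂ * ag) = T at htT ⊢
    generalize hT'def : Ring.inverse (1 + ag * j₂) = T' at hT't'
    -- splitting consequences of the condition
    have hz : ((1 - a * ap) * (j * U)) * (1 - ap * a) = 0 := by
      rw [← mul_assoc]; exact hcond
    have hsplit : (1 - a * ap) * (j * U) = ((1 - a * ap) * (j * U)) * (ap * a) := by
      calc (1 - a * ap) * (j * U)
          = ((1 - a * ap) * (j * U)) * (1 - ap * a) + ((1 - a * ap) * (j * U)) * (ap * a) := by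
            noncomm_ring
      _ = 0 + ((1 - a * ap) * (j * U)) * (ap * a) := by rw [hz]
      _ = ((1 - a * ap) * (j * U)) * (ap * a) := zero_add _
    have hsplit2 : (j * U) * (1 - ap * a) = (a * ap) * ((j * U) * (1 - ap * a)) := by
      calc (j * U) * (1 - ap * a)
          = ((1 - a * ap) * (j * U)) * (1 - ap * a) + (a * ap) * ((j * U) * (1 - ap * a)) := by
            noncomm_ring
      _ = 0 + (a * ap) * ((j * U) * (1 - ap * a)) := by rw [hz]
      _ = (a * ap) * ((j * U) * (1 - ap * a)) := zero_add _
    have haa : a * (a * ag) = a := by rw [h3, ← mul_assoc, h1]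
    have h6 : (a + (1 - a * ap) * (j * U)) * (1 + ap * j) = a + j := by
      calc (a + (1 - a * ap) * (j * U)) * (1 + ap * j)
          = a * (1 + ap * j) + (1 - a * ap) * (j * (U * (1 + ap * j))) := by noncomm_ring
      _ = a * (1 + ap * j) + (1 - a * ap) * (j * 1) := by rw [hUu]
      _ = a + j := by noncomm_ring
    have hbU : (a + j) * U = a + (1 - a * ap) * (j * U) := by
      calc (a + j) * U = ((a + (1 - a * ap) * (j * U)) * (1 + ap * j)) * U := by rw [h6]
      _ = (a + (1 - a * ap) * (j * U)) * ((1 + ap * j) * U) := by rw [mul_assoc]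
      _ = a + (1 - a * ap) * (j * U) := by rw [huU, mul_one]
    have h8 : (ap * a) * (1 - a * ag) = 0 := by
      calc (ap * a) * (1 - a * ag) = ap * a - ap * (a * (a * ag)) := by noncomm_ring
      _ = ap * a - ap * a := by rw [haa]
      _ = 0 := sub_self _
    have hi : (a + j) * U * (1 - a * ag) = 0 := by
      have h7 : ((1 - a * ap) * (j * U)) * (1 - a * ag)
          = (((1 - a * ap) * (j * U)) * (ap * a)) * (1 - a * ag) := by rw [← hsplit]
      calc (a + j) * U * (1 - a * ag) = (a + (1 - a * ap) * (j * U)) * (1 - a * ag) := by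
            rw [hbU]
      _ = a * (1 - a * ag) + ((1 - a * ap) * (j * U)) * (1 - a * ag) := by noncomm_ring
      _ = a * (1 - a * ag) + (((1 - a * ap) * (j * U)) * (ap * a)) * (1 - a * ag) := by rw [h7]
      _ = a * (1 - a * ag) + ((1 - a * ap) * (j * U)) * ((ap * a) * (1 - a * ag)) := by
            noncomm_ring
      _ = a * (1 - a * ag) + ((1 - a * ap) * (j * U)) * 0 := by rw [h8]
      _ = a - a * (a * ag) := by noncomm_ring
      _ = a - a := by rw [haa]
      _ = 0 := sub_self _
    have hVj : V * j = j * U := by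
      have hjv : j * ((1 + ap * j) * U) = (1 + j * ap) * (j * U) := by noncomm_ring
      calc V * j = V * (j * ((1 + ap * j) * U)) := by rw [huU, mul_one]
      _ = V * ((1 + j * ap) * (j * U)) := by rw [hjv]
      _ = (V * (1 + j * ap)) * (j * U) := by noncomm_ring
      _ = j * U := by rw [hVv, one_mul]
    have hVb : V * (a + j) = a + (j * U) * (1 - ap * a) := by
      have h9 : (1 + j * ap) * a + j * (1 - ap * a) = a + j := by noncomm_ring
      calc V * (a + j) = V * ((1 + j * ap) * a + j * (1 - ap * a)) := by rw [h9]
      _ = (V * (1 + j * ap)) * a + (V * j) * (1 - ap * a) := by noncomm_ring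
      _ = 1 * a + (j * U) * (1 - ap * a) := by rw [hVv, hVj]
      _ = a + (j * U) * (1 - ap * a) := by rw [one_mul]
    have h10 : (1 - a * ag) * (a * ap) = 0 := by
      have h' : (a * ag) * (a * ap) = a * ap := by rw [← mul_assoc, h1]
      calc (1 - a * ag) * (a * ap) = a * ap - (a * ag) * (a * ap) := by noncomm_ring
      _ = a * ap - a * ap := by rw [h']
      _ = 0 := sub_self _
    have h11 : (1 - a * ag) * a = 0 := by
      calc (1 - a * ag) * a = a - a * ag * a := by noncomm_ring
      _ = a - a := by rw [h1]
      _ = 0 := sub_self _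
    have hii : (1 - a * ag) * (V * (a + j)) = 0 := by
      have h12 : (1 - a * ag) * ((j * U) * (1 - ap * a))
          = (1 - a * ag) * ((a * ap) * ((j * U) * (1 - ap * a))) := by rw [← hsplit2]
      calc (1 - a * ag) * (V * (a + j))
          = (1 - a * ag) * (a + (j * U) * (1 - ap * a)) := by rw [hVb]
      _ = (1 - a * ag) * a + (1 - a * ag) * ((j * U) * (1 - ap * a)) := by noncomm_ring
      _ = (1 - a * ag) * a + (1 - a * ag) * ((a * ap) * ((j * U) * (1 - ap * a))) := by
            rw [h12]
      _ = (1 - a * ag) * a + ((1 - a * ag) * (a * ap)) * ((j * U) * (1 - ap * a)) := by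
            noncomm_ring
      _ = 0 + 0 * ((j * U) * (1 - ap * a)) := by rw [h10, h11]
      _ = 0 := by rw [zero_mul, add_zero]
    have hagt : ag * (1 + j₂ * ag) = (1 + ag * j₂) * ag := by noncomm_ring
    have hc : (1 + ap * j) * (a + j) * (1 + j * ap) = a + j₂ := by rw [hj₂]; noncomm_ring
    have hcag : (a + j₂) * ag = (1 + j₂ * ag) + a * ag - 1 := by noncomm_ring
    have hagc : ag * (a + j₂) = (1 + ag * j₂) + a * ag - 1 := by
      rw [mul_add, ← h3]; noncomm_ring
    exact aux_group a ag (a + j) (a + j₂) (1 + ap * j) U (1 + j * ap) V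
      (1 + j₂ * ag) (1 + ag * j₂) T T' h1 h2 h3 huU hUu hvV hVv htT hT't'
      hagt hc hcag hagc hi hii
  refine ⟨⟨?_, ?_⟩, ⟨?_, ?_⟩, main⟩
  · rintro ⟨x, hgi⟩
    have hgi' : (a + j) * x * (a + j) = a + j ∧ x * (a + j) * x = x ∧
        (a + j) * x = x * (a + j) := hgi
    exact ⟨x, hgi'.1⟩
  · intro hreg
    exact ⟨_, (main (regcond hreg) _ rfl).2⟩
  · rintro ⟨x, hgi⟩
    have hgi' : (a + j) * x * (a + j) = a + j ∧ x * (a + j) * x = x ∧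
        (a + j) * x = x * (a + j) := hgi
    exact regcond ⟨x, hgi'.1⟩
  · intro hcond
    exact ⟨_, (main hcond _ rfl).2⟩
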